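/- Let α be an action of a finite group G on a unital C*-algebra A and E(x) = (1/|G|) ∑_{g∈G} α_g(x) the canonical conditional expectation onto the fixed point algebra P = A^α. Then α has the Rohlin property if and only if there exists a projection e ∈ A_∞ with E^∞(e) = (1/|G|)·1, where E^∞ : A^∞ → P^∞ is the induced expectation. -/

import Mathlib

/-- A sequence `(a n)` in a normed space is bounded. -/
def IsBddSeq {A : Type*} [Norm A] (a : ℕ → A) : Prop := ∃ C : ℝ, ∀ n, ‖a n‖ ≤ C

/-- Data exhibiting the algebra `Ainf` as the quotient `A^∞ = ℓ^∞(ℕ, A)/c₀(A)` of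
bounded sequences in `A` modulo null sequences; `q` is the quotient map (its values
on unbounded sequences are irrelevant). -/
structure SeqAlg (A : Type*) [NormedRing A] [StarRing A] [NormedAlgebra ℂ A]
    (Ainf : Type*) [Ring Ainf] [StarRing Ainf] [Algebra ℂ Ainf] where
  q : (ℕ → A) → Ainf
  surj : ∀ z : Ainf, ∃ a : ℕ → A, IsBddSeq a ∧ q a = z
  q_add : ∀ a b : ℕ → A, IsBddSeq a → IsBddSeq b → q (a + b) = q a + q b
  q_mul : ∀ a b : ℕ → A, IsBddSeq a → IsBddSeq b → q (a * b) = q a * q b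
  q_smul : ∀ (c : ℂ) (a : ℕ → A), IsBddSeq a → q (c • a) = c • q a
  q_star : ∀ a : ℕ → A, IsBddSeq a → q (star a) = star (q a)
  q_one : q 1 = 1
  q_eq_zero_iff : ∀ a : ℕ → A, IsBddSeq a →
    (q a = 0 ↔ Filter.Tendsto (fun n => ‖a n‖) Filter.atTop (nhds 0))

/-- The canonical embedding of `A` into `Ainf` as (classes of) constant sequences. -/
def SeqAlg.incl {A : Type*} [NormedRing A] [StarRing A] [NormedAlgebra ℂ A]
    {Ainf : Type*} [Ring Ainf] [StarRing Ainf] [Algebra ℂ Ainf]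
    (S : SeqAlg A Ainf) (x : A) : Ainf := S.q fun _ => x

/-- The action of `g : G` as a star-algebra automorphism of `A`. -/
noncomputable def actEquiv {A : Type*} [NormedRing A] [StarRing A] [NormedAlgebra ℂ A]
    {G : Type*} [Group G] [MulSemiringAction G A]
    (hstar : ∀ (g : G) (x : A), g • (star x) = star (g • x))
    (hsmul : ∀ (g : G) (c : ℂ) (x : A), g • (c • x) = c • (g • x)) (g : G) :
    A ≃⋆ₐ[ℂ] A where
  toFun x := g • x
  invFun x := g⁻¹ • x
  left_inv x := by simp [smul_smul]
  right_inv x := by simp [smul_smul]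
  map_add' := smul_add g
  map_mul' := smul_mul' g
  map_smul' c x := hsmul g c x
  map_star' x := hstar g x

/-- let `α` be an action of a finite group `G` on a unital C*-algebra `A`
and `E(x) = (1/|G|) ∑_g α_g x` the canonical conditional expectation onto the fixed
point algebra. Then `α` has the Rohlin property (a partition of unity `{e_g} ⊆ A_∞`
of projections with `(α_g)_∞(e_h) = e_{gh}`) if and only if there is a projection
`e ∈ A_∞` with `E^∞(e) = (1/|G|)·1`. -/
theorem rohlin_iff_projection_with_expectation
    {A : Type*} [NormedRing A] [StarRing A] [CStarRing A] [NormedAlgebra ℂ A]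
    [CompleteSpace A] [StarModule ℂ A]
    {G : Type*} [Group G] [Fintype G] [MulSemiringAction G A]
    (hstar : ∀ (g : G) (x : A), g • (star x) = star (g • x))
    (hsmul : ∀ (g : G) (c : ℂ) (x : A), g • (c • x) = c • (g • x))
    {Ainf : Type*} [Ring Ainf] [StarRing Ainf] [Algebra ℂ Ainf] (S : SeqAlg A Ainf)
    (αinf : G → Ainf → Ainf)
    (hαinf : ∀ (g : G) (a : ℕ → A), IsBddSeq a →
      αinf g (S.q a) = S.q fun n => g • a n)
    (E : A → A) (hE : ∀ x : A, E x = ((Fintype.card G : ℂ))⁻¹ • ∑ g : G, g • x)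
    (Einf : Ainf → Ainf)
    (hEinf : ∀ a : ℕ → A, IsBddSeq a → Einf (S.q a) = S.q fun n => E (a n)) :
    (∃ e : G → Ainf,
        (∀ g, e g * e g = e g) ∧ (∀ g, star (e g) = e g) ∧
        (∑ g : G, e g = 1) ∧
        (∀ (g : G) (x : A), Commute (e g) (S.incl x)) ∧
        (∀ g h : G, αinf g (e h) = e (g * h)))
      ↔ (∃ e : Ainf, e * e = e ∧ star e = e ∧
          (∀ x : A, Commute e (S.incl x)) ∧
          Einf e = ((Fintype.card G : ℂ))⁻¹ • 1) := by
  classical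
  letI : CStarAlgebra A := { }
  have hc : (Fintype.card G : ℂ) ≠ 0 := Nat.cast_ne_zero.2 Fintype.card_ne_zero
  have hnorm : ∀ (g : G) (x : A), ‖g • x‖ = ‖x‖ := fun g x =>
    StarAlgEquiv.norm_map (actEquiv hstar hsmul g) x
  -- boundedness lemmas
  have bdd_smulg : ∀ (g : G) (a : ℕ → A), IsBddSeq a → IsBddSeq (fun n => g • a n) := by
    rintro g a ⟨C, hC⟩
    exact ⟨C, fun n => by rw [hnorm]; exact hC n⟩
  have bdd_add : ∀ a b : ℕ → A, IsBddSeq a → IsBddSeq b → IsBddSeq (a + b) := by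
    rintro a b ⟨C, hC⟩ ⟨D, hD⟩
    exact ⟨C + D, fun n => (norm_add_le _ _).trans (add_le_add (hC n) (hD n))⟩
  have bdd_sub : ∀ a b : ℕ → A, IsBddSeq a → IsBddSeq b → IsBddSeq (a - b) := by
    rintro a b ⟨C, hC⟩ ⟨D, hD⟩
    exact ⟨C + D, fun n => (norm_sub_le _ _).trans (add_le_add (hC n) (hD n))⟩
  have bdd_mul : ∀ a b : ℕ → A, IsBddSeq a → IsBddSeq b → IsBddSeq (a * b) := by
    rintro a b ⟨C, hC⟩ ⟨D, hD⟩
    refine ⟨max C 0 * max D 0, fun n => (norm_mul_le _ _).trans ?_⟩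
    exact mul_le_mul ((hC n).trans (le_max_left _ _)) ((hD n).trans (le_max_left _ _))
      (norm_nonneg _) (le_max_right _ _)
  have bdd_csmul : ∀ (c : ℂ) (a : ℕ → A), IsBddSeq a → IsBddSeq (c • a) := by
    rintro c a ⟨C, hC⟩
    refine ⟨‖c‖ * max C 0, fun n => ?_⟩
    have : ‖(c • a) n‖ = ‖c‖ * ‖a n‖ := by simp [norm_smul]
    rw [this]
    exact mul_le_mul_of_nonneg_left ((hC n).trans (le_max_left _ _)) (norm_nonneg c)
  have bdd_star : ∀ a : ℕ → A, IsBddSeq a → IsBddSeq (star a) := by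
    rintro a ⟨C, hC⟩
    exact ⟨C, fun n => by simpa [norm_star] using hC n⟩
  have bdd_const : ∀ x : A, IsBddSeq (fun _ => x) := fun x => ⟨‖x‖, fun _ => le_rfl⟩
  -- q of zero and subtraction
  have q_zero : S.q (fun _ => (0 : A)) = 0 := by
    refine (S.q_eq_zero_iff _ ⟨0, fun n => by simp⟩).2 ?_
    simpa using (tendsto_const_nhds : Filter.Tendsto (fun _ : ℕ => (0 : ℝ)) Filter.atTop (nhds 0))
  have q_sub : ∀ a b : ℕ → A, IsBddSeq a → IsBddSeq b → S.q (a - b) = S.q a - S.q b := by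
    intro a b ha hb
    have h1 : a - b = a + (-1 : ℂ) • b := by
      funext n; simp [sub_eq_add_neg]
    rw [h1, S.q_add a ((-1 : ℂ) • b) ha (bdd_csmul _ _ hb), S.q_smul _ _ hb]
    simp [sub_eq_add_neg]
  -- key congruence lemma: `q a = q b` implies `q (g • a) = q (g • b)`
  have key : ∀ (g : G) (a b : ℕ → A), IsBddSeq a → IsBddSeq b → S.q a = S.q b →
      S.q (fun n => g • a n) = S.q (fun n => g • b n) := by
    intro g a b ha hb hab
    have h0 : S.q (a - b) = 0 := by rw [q_sub a b ha hb, hab, sub_self]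
    have htend := (S.q_eq_zero_iff (a - b) (bdd_sub a b ha hb)).1 h0
    have h0' : S.q ((fun n => g • a n) - fun n => g • b n) = 0 := by
      refine (S.q_eq_zero_iff _ (bdd_sub _ _ (bdd_smulg g a ha) (bdd_smulg g b hb))).2 ?_
      have : (fun n => ‖((fun n => g • a n) - fun n => g • b n) n‖) =
          fun n => ‖(a - b) n‖ := by
        funext n
        simp only [Pi.sub_apply]
        rw [← smul_sub, hnorm]
      rw [this]
      exact htend
    have := q_sub _ _ (bdd_smulg g a ha) (bdd_smulg g b hb)
    rw [this] at h0'
    exact sub_eq_zero.1 h0'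
  -- q of finite sums
  have q_sum : ∀ (f : G → ℕ → A), (∀ g, IsBddSeq (f g)) → ∀ s : Finset G,
      IsBddSeq (fun n => ∑ g ∈ s, f g n) ∧
        S.q (fun n => ∑ g ∈ s, f g n) = ∑ g ∈ s, S.q (f g) := by
    intro f hf s
    induction s using Finset.induction_on with
    | empty => simp only [Finset.sum_empty]; exact ⟨⟨0, fun n => by simp⟩, q_zero⟩
    | insert _ _ hx ih =>
      rename_i x s
      have hfun : (fun n => ∑ g ∈ insert x s, f g n) = f x + fun n => ∑ g ∈ s, f g n := by
        funext n; simp [Finset.sum_insert hx]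
      constructor
      · rw [hfun]; exact bdd_add _ _ (hf x) ih.1
      · rw [hfun, S.q_add _ _ (hf x) ih.1, ih.2, Finset.sum_insert hx]
  constructor
  · -- Rohlin ⇒ projection with expectation 1/|G|
    rintro ⟨e, hproj, hsa, hsum, hcomm, hcoc⟩
    obtain ⟨a, ha, hqa⟩ := S.surj (e 1)
    refine ⟨e 1, hproj 1, hsa 1, hcomm 1, ?_⟩
    rw [← hqa, hEinf a ha]
    have hEfun : (fun n => E (a n)) =
        ((Fintype.card G : ℂ))⁻¹ • fun n => ∑ g : G, g • a n := by
      funext n; simp [hE]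
    obtain ⟨hbs, hqs⟩ := q_sum (fun g n => g • a n) (fun g => bdd_smulg g a ha) Finset.univ
    rw [hEfun, S.q_smul _ _ hbs, hqs]
    have : ∀ g : G, S.q (fun n => g • a n) = e g := by
      intro g
      rw [← hαinf g a ha, hqa, hcoc g 1, mul_one]
    simp only [this, hsum]
  · -- projection with expectation 1/|G| ⇒ Rohlin
    rintro ⟨e, hproj, hsa, hcomm, hEe⟩
    obtain ⟨a, ha, hqa⟩ := S.surj e
    have qg : ∀ g : G, αinf g e = S.q (fun n => g • a n) := by
      intro g; rw [← hqa, hαinf g a ha]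
    refine ⟨fun g => αinf g e, ?_, ?_, ?_, ?_, ?_⟩
    · -- idempotent
      intro g
      show αinf g e * αinf g e = αinf g e
      rw [qg g, ← S.q_mul _ _ (bdd_smulg g a ha) (bdd_smulg g a ha)]
      have h1 : (fun n => g • a n) * (fun n => g • a n) = fun n => g • (a * a) n := by
        funext n; simp [smul_mul']
      rw [h1]
      refine key g (a * a) a (bdd_mul a a ha ha) ha ?_
      rw [S.q_mul a a ha ha, hqa, hproj]
    · -- self-adjoint
      intro g
      show star (αinf g e) = αinf g e
      rw [qg g, ← S.q_star _ (bdd_smulg g a ha)]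
      have h1 : star (fun n => g • a n) = fun n => g • (star a) n := by
        funext n; simp [Pi.star_apply, hstar]
      rw [h1]
      refine key g (star a) a (bdd_star a ha) ha ?_
      rw [S.q_star a ha, hqa, hsa]
    · -- partition of unity
      obtain ⟨hbs, hqs⟩ := q_sum (fun g n => g • a n) (fun g => bdd_smulg g a ha) Finset.univ
      have h1 : Einf e = ((Fintype.card G : ℂ))⁻¹ • ∑ g : G, αinf g e := by
        rw [← hqa, hEinf a ha]
        have hEfun : (fun n => E (a n)) =
            ((Fintype.card G : ℂ))⁻¹ • fun n => ∑ g : G, g • a n := by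
          funext n; simp [hE]
        rw [hEfun, S.q_smul _ _ hbs, hqs]
        congr 1
        exact Finset.sum_congr rfl fun g _ => (hαinf g a ha).symm
      rw [hEe] at h1
      have h2 := congrArg (fun z => (Fintype.card G : ℂ) • z) h1
      simpa [smul_smul, mul_inv_cancel₀ hc] using h2.symm
    · -- commutes with constants
      intro g x
      set y : ℕ → A := fun _ => g⁻¹ • x with hy_def
      have bdd_y : IsBddSeq y := ⟨‖g⁻¹ • x‖, fun _ => le_rfl⟩
      have hy : S.q a * S.q y = S.q y * S.q a := by
        rw [hqa]; exact (hcomm (g⁻¹ • x)).eq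
      have hy' : S.q (a * y) = S.q (y * a) := by
        rw [S.q_mul _ _ ha bdd_y, S.q_mul _ _ bdd_y ha]; exact hy
      have hk := key g (a * y) (y * a) (bdd_mul _ _ ha bdd_y) (bdd_mul _ _ bdd_y ha) hy'
      have hl : (fun n => g • (a * y) n) = (fun n => g • a n) * fun _ => x := by
        funext n
        show g • (a n * (g⁻¹ • x)) = (g • a n) * x
        rw [smul_mul', smul_inv_smul]
      have hr : (fun n => g • (y * a) n) = (fun _ => x) * fun n => g • a n := by
        funext n
        show g • ((g⁻¹ • x) * a n) = x * (g • a n)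
        rw [smul_mul', smul_inv_smul]
      rw [hl, hr] at hk
      show αinf g e * S.incl x = S.incl x * αinf g e
      rw [qg g]
      unfold SeqAlg.incl
      rw [← S.q_mul _ _ (bdd_smulg g a ha) (bdd_const x),
        ← S.q_mul _ _ (bdd_const x) (bdd_smulg g a ha)]
      exact hk
    · -- equivariance
      intro g h
      show αinf g (αinf h e) = αinf (g * h) e
      rw [qg h, hαinf g _ (bdd_smulg h a ha), qg (g * h)]
      congr 1
      funext n
      rw [mul_smul]
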